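/- Let H ≤ GL_1(q) with |H| = t, let x ∈ GL_1(q), let m be the order of xH in GL_1(q)/H, and write m = (q-1)/(tC). Let ℓ be a divisor of f where q = p^f. Then x^{(p^ℓ-1)/(p-1)} is a (p^ℓ - 1)-th power modulo H if and only if for every prime r, min{γ_r(C) + γ_r(m), γ_r(p^ℓ - 1)} ≤ γ_r(C) + min{γ_r(m), γ_r((p^ℓ-1)/(p-1))}. -/

import Mathlib

lemma cyclic_pow_iff {G : Type*} [CommGroup G] [Finite G] [IsCyclic G] (z : G) (n : ℕ) :
    (∃ y : G, y ^ n = z) ↔ z ^ (Nat.card G / Nat.gcd (Nat.card G) n) = 1 := by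
  set N := Nat.card G with hN
  set d := Nat.gcd N n with hd
  have hN0 : 0 < N := Nat.card_pos
  have hdN : d ∣ N := Nat.gcd_dvd_left _ _
  have hdn : d ∣ n := Nat.gcd_dvd_right _ _
  have hd0 : 0 < d := Nat.pos_of_dvd_of_pos hdN hN0
  constructor
  · rintro ⟨y, rfl⟩
    rw [← pow_mul]
    have h1 : n * (N / d) = n / d * N := by
      obtain ⟨n', hn'⟩ := hdn
      obtain ⟨N', hN'⟩ := hdN
      rw [hn', hN', Nat.mul_div_cancel_left _ hd0, Nat.mul_div_cancel_left _ hd0]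
      ring
    rw [h1, pow_mul, hN, pow_card_eq_one']
  · intro h
    obtain ⟨g, hg⟩ := IsCyclic.exists_generator (α := G)
    obtain ⟨k, hk⟩ := hg z
    have hk2 : g ^ k = z := hk
    have hgN : orderOf g = N := orderOf_eq_card_of_forall_mem_zpowers hg
    have hNd0 : (0:ℤ) < ((N / d : ℕ) : ℤ) := by
      exact_mod_cast Nat.div_pos (Nat.le_of_dvd hN0 hdN) hd0
    have hNd : (N:ℤ) = (d:ℤ) * ((N/d : ℕ):ℤ) := by
      exact_mod_cast (Nat.mul_div_cancel' hdN).symm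
    have hdk : (d : ℤ) ∣ k := by
      have h2 : (g ^ k) ^ (N / d : ℕ) = 1 := by rw [hk2]; exact h
      rw [← zpow_natCast (g ^ k), ← zpow_mul] at h2
      have h3 : (orderOf g : ℤ) ∣ k * (N / d : ℕ) := orderOf_dvd_iff_zpow_eq_one.mpr h2
      rw [hgN] at h3
      obtain ⟨c, hc⟩ := h3
      have h4 : k * ((N/d:ℕ):ℤ) = ((d:ℤ) * c) * ((N/d:ℕ):ℤ) := by
        rw [hc, hNd]; ring
      exact ⟨c, mul_right_cancel₀ (ne_of_gt hNd0) h4⟩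
    have hbez : (d : ℤ) = N * Nat.gcdA N n + n * Nat.gcdB N n := Nat.gcd_eq_gcd_ab N n
    obtain ⟨k', hk'⟩ := hdk
    refine ⟨g ^ (Nat.gcdB N n * k'), ?_⟩
    rw [← zpow_natCast (g ^ _), ← zpow_mul, ← hk2]
    have horder : ∀ a b : ℤ, (N:ℤ) ∣ a - b → g ^ a = g ^ b := by
      intro a b hab
      have h5 : g ^ (a - b) = 1 := by
        apply orderOf_dvd_iff_zpow_eq_one.mp
        rwa [hgN]
      rw [← sub_add_cancel a b, zpow_add, h5, one_mul]
    apply horder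
    refine ⟨-(Nat.gcdA N n * k'), ?_⟩
    rw [hk']
    calc Nat.gcdB N n * k' * (n:ℤ) - (d:ℤ) * k'
        = ((n:ℤ) * Nat.gcdB N n - (d:ℤ)) * k' := by ring
      _ = (-((N:ℤ) * Nat.gcdA N n)) * k' := by rw [hbez]; ring
      _ = (N:ℤ) * (-(Nat.gcdA N n * k')) := by ring

lemma cyclic_pow_iff' {G : Type*} [CommGroup G] [Finite G] [IsCyclic G] (x : G) (s n : ℕ) :
    (∃ y : G, y ^ n = x ^ s) ↔ orderOf x ∣ s * (Nat.card G / Nat.gcd (Nat.card G) n) := by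
  rw [cyclic_pow_iff, ← pow_mul, orderOf_dvd_iff_pow_eq_one]

theorem nat_inf_eq_min (a b : ℕ) : a ⊓ b = min a b := rfl

/-- with `H ≤ GL_1(q) = F_q^×` of order `t`, `x ∈ F_q^×`, `m` the order of
`xH` in `F_q^×/H`, and `C = (q-1)/(tm)`, for a divisor `ℓ` of `f` (where `q = p^f`):
`x^{(p^ℓ-1)/(p-1)}` is a `(p^ℓ-1)`-th power modulo `H` if and only if for every prime `r`,
`min(γ_r(C) + γ_r(m), γ_r(p^ℓ-1)) ≤ γ_r(C) + min(γ_r(m), γ_r((p^ℓ-1)/(p-1)))`. -/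
theorem stmt_18 (F : Type*) [Field F] [Fintype F]
    (p f ℓ t m C : ℕ) (hp : p.Prime) (hf : 1 ≤ f) (hcard : Fintype.card F = p ^ f)
    (hℓ : ℓ ∣ f) (hℓ1 : 1 ≤ ℓ)
    (H : Subgroup Fˣ) (ht : Nat.card H = t)
    (x : Fˣ) (hm : m = orderOf (QuotientGroup.mk x : Fˣ ⧸ H))
    (hC : m * (t * C) = p ^ f - 1) :
    (∃ y : Fˣ ⧸ H, y ^ (p ^ ℓ - 1) =
        (QuotientGroup.mk x : Fˣ ⧸ H) ^ ((p ^ ℓ - 1) / (p - 1))) ↔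
      ∀ r : ℕ, r.Prime →
        min (padicValNat r C + padicValNat r m) (padicValNat r (p ^ ℓ - 1)) ≤
          padicValNat r C +
            min (padicValNat r m) (padicValNat r ((p ^ ℓ - 1) / (p - 1))) := by
  have hp2 : 2 ≤ p := hp.two_le
  set n := p ^ ℓ - 1 with hn
  set s := (p ^ ℓ - 1) / (p - 1) with hs
  have hpl : p ≤ p ^ ℓ := Nat.le_self_pow (by omega) p
  have hn0 : 0 < n := by omega
  have hps : p - 1 ∣ n := by
    simpa only [one_pow] using Nat.sub_dvd_pow_sub_pow p 1 ℓ
  have hs0 : 0 < s := Nat.div_pos (Nat.le_of_dvd hn0 hps) (by omega)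
  have hq0 : 0 < p ^ f - 1 := by
    have : p ≤ p ^ f := Nat.le_self_pow (by omega) p
    omega
  haveI : Finite (Fˣ ⧸ H) := Quotient.finite _
  have hm0 : 0 < m := by
    rw [hm]; exact orderOf_pos (QuotientGroup.mk x : Fˣ ⧸ H)
  have hC0 : 0 < C := by
    rcases Nat.eq_zero_or_pos C with h | h
    · rw [h] at hC; omega
    · exact h
  have ht0 : 0 < t := by
    rcases Nat.eq_zero_or_pos t with h | h
    · rw [h] at hC; omega
    · exact h
  have hcardU : Nat.card Fˣ = p ^ f - 1 := by
    rw [Nat.card_units, Nat.card_eq_fintype_card, hcard]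
  have hNt : Nat.card (Fˣ ⧸ H) * t = p ^ f - 1 := by
    rw [← ht, ← Subgroup.card_eq_card_quotient_mul_card_subgroup, hcardU]
  have hN : Nat.card (Fˣ ⧸ H) = m * C := by
    refine Nat.eq_of_mul_eq_mul_right ht0 ?_
    rw [hNt, ← hC]; ring
  haveI : IsCyclic (Fˣ ⧸ H) := isCyclic_of_surjective (QuotientGroup.mk' H)
    (QuotientGroup.mk'_surjective H)
  set g := Nat.gcd (m * C) n with hg
  have hg0 : 0 < g := Nat.gcd_pos_of_pos_left _ (by positivity)
  have hgmc : g ∣ m * C := Nat.gcd_dvd_left _ _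
  have step1 : (∃ y : Fˣ ⧸ H, y ^ n = (QuotientGroup.mk x : Fˣ ⧸ H) ^ s) ↔ g ∣ s * C := by
    have k1 := cyclic_pow_iff' (QuotientGroup.mk x : Fˣ ⧸ H) s n
    rw [hN, ← hg, ← hm] at k1
    rw [k1]
    constructor
    · intro h
      have h2 : m * g ∣ (s * (m * C / g)) * g := mul_dvd_mul h dvd_rfl
      rw [mul_assoc, Nat.div_mul_cancel hgmc] at h2
      have h3 : m * g ∣ m * (s * C) := by
        have h4 : s * (m * C) = m * (s * C) := by ring
        rwa [h4] at h2
      exact (mul_dvd_mul_iff_left hm0.ne').mp h3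
    · intro h
      have h2 : m * g ∣ m * (s * C) := mul_dvd_mul_left m h
      have h3 : m * (s * C) = (s * (m * C / g)) * g := by
        rw [mul_assoc, Nat.div_mul_cancel hgmc]; ring
      rw [h3] at h2
      exact (mul_dvd_mul_iff_right hg0.ne').mp h2
  have step2 : g ∣ s * C ↔ ∀ r : ℕ, r.Prime →
      min (padicValNat r C + padicValNat r m) (padicValNat r n) ≤
        padicValNat r C + padicValNat r s := by
    rw [← Nat.factorization_le_iff_dvd hg0.ne' (by positivity), Finsupp.le_def]
    constructor
    · intro h r hr
      have h5 := h r
      rw [hg, Nat.factorization_gcd (by positivity) hn0.ne',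
        Finsupp.inf_apply, Nat.factorization_mul hm0.ne' hC0.ne',
        Nat.factorization_mul hs0.ne' hC0.ne', Finsupp.add_apply, Finsupp.add_apply,
        Nat.factorization_def _ hr, Nat.factorization_def _ hr,
        Nat.factorization_def _ hr, Nat.factorization_def _ hr, nat_inf_eq_min] at h5
      omega
    · intro h r
      by_cases hr : r.Prime
      · have h5 := h r hr
        rw [hg, Nat.factorization_gcd (by positivity) hn0.ne',
          Finsupp.inf_apply, Nat.factorization_mul hm0.ne' hC0.ne',
          Nat.factorization_mul hs0.ne' hC0.ne', Finsupp.add_apply, Finsupp.add_apply,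
          Nat.factorization_def _ hr, Nat.factorization_def _ hr,
          Nat.factorization_def _ hr, Nat.factorization_def _ hr, nat_inf_eq_min]
        omega
      · simp [Nat.factorization_eq_zero_of_not_prime _ hr]
  rw [step1, step2]
  constructor
  · intro h r hr
    have h6 := h r hr
    omega
  · intro h r hr
    have h6 := h r hr
    omega
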